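/- Let P(a) = (H/n!)·aⁿ + lower order terms be a degree-n polynomial with rational coefficients satisfying P(0) = 1, and suppose there exist integers a₀ < a₁ < ⋯ < aₙ such that P(aᵢ - aⱼ) = 0 for all i < j. Then the set {aᵢ - aⱼ : i < j} has exactly n elements, and there exists a nonzero integer k such that aᵢ = a₀ + k·i for all i; moreover P vanishes exactly at -k, -2k, …, -nk (for k > 0 after possibly replacing k with -k and the aᵢ by their negatives). -/
import Mathlib

/-- Auxiliary: a ℕ-indexed sequence, strictly monotone up to `n`, all of whose
differences (up to `n`) are of the form `b 0 - b t` with `1 ≤ t ≤ n`, is an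
arithmetic progression up to `n`. -/
theorem aux_arith_prog_nat (n : ℕ) (hn : 0 < n) (b : ℕ → ℤ)
    (hb : ∀ p q : ℕ, p < q → q ≤ n → b p < b q)
    (hdiff : ∀ i j : ℕ, i < j → j ≤ n → ∃ t : ℕ, 1 ≤ t ∧ t ≤ n ∧ b i - b j = b 0 - b t) :
    ∀ j : ℕ, j ≤ n → b j = b 0 + (b 1 - b 0) * j := by
  have hble : ∀ p q : ℕ, p ≤ q → q ≤ n → b p ≤ b q := by
    intro p q hpq hqn
    rcases Nat.eq_or_lt_of_le hpq with rfl | h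
    · exact le_rfl
    · exact le_of_lt (hb p q h hqn)
  intro j
  induction j with
  | zero => intro _; simp
  | succ j ih =>
    intro hj
    rcases Nat.eq_zero_or_pos j with rfl | hjpos
    · push_cast; ring
    · obtain ⟨t, ht1, htn, hm⟩ := hdiff 1 (j+1) (by omega) hj
      obtain ⟨s, hs1, hsn, hm'⟩ := hdiff j (j+1) (by omega) hj
      have h01 : b 0 < b 1 := hb 0 1 (by omega) (by omega)
      have h1 : b t < b (j+1) := by omega
      have h2 : t ≤ j := by
        by_contra hc
        push_neg at hc
        have := hble (j+1) t hc htn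
        omega
      have h4 : b t ≤ b j := hble t j h2 (by omega)
      have h5 : b 1 ≤ b s := hble 1 s hs1 hsn
      have h6 : b j ≤ b t := by omega
      have h7 : b t = b j := le_antisymm h4 h6
      have IH := ih (by omega)
      have h8 : b (j+1) = b 1 + b j - b 0 := by omega
      rw [h8, IH]
      push_cast
      ring



/-- if a degree-n rational polynomial P with P(0) = 1 vanishes at
all differences aᵢ - aⱼ (i < j) of integers a₀ < a₁ < ⋯ < aₙ, then those
differences form a set of exactly n elements, the aᵢ form an arithmetic
progression aᵢ = a₀ + k·i with k ≠ 0, and P vanishes exactly at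
-k, -2k, …, -nk. -/
theorem arithmetic_progression_of_roots
    (n : ℕ) (hn : 0 < n) (P : Polynomial ℚ) (hdeg : P.degree = n)
    (h0 : P.eval 0 = 1)
    (a : Fin (n + 1) → ℤ) (hmono : StrictMono a)
    (hroots : ∀ i j : Fin (n + 1), i < j →
      P.eval ((a i : ℚ) - (a j : ℚ)) = 0) :
    ({d : ℤ | ∃ i j : Fin (n + 1), i < j ∧ d = a i - a j}.ncard = n) ∧
    ∃ k : ℤ, k ≠ 0 ∧ (∀ i : Fin (n + 1), a i = a 0 + k * (i : ℕ)) ∧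
      ∀ x : ℚ, P.eval x = 0 ↔ ∃ l : ℕ, 1 ≤ l ∧ l ≤ n ∧ x = -((l : ℚ) * (k : ℚ)) := by
  have hP0 : P ≠ 0 := by
    intro h; rw [h] at h0; simp at h0
  have hcard_le : P.roots.toFinset.card ≤ n := by
    calc P.roots.toFinset.card ≤ Multiset.card P.roots := P.roots.toFinset_card_le
    _ ≤ P.natDegree := P.card_roots'
    _ = n := Polynomial.natDegree_eq_of_degree_eq_some hdeg
  have hainj : Function.Injective a := hmono.injective
  have hmem : ∀ i j : Fin (n+1), i < j → ((a i - a j : ℤ) : ℚ) ∈ P.roots.toFinset := by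
    intro i j hij
    rw [Multiset.mem_toFinset, Polynomial.mem_roots hP0]
    show P.eval _ = 0
    push_cast
    exact hroots i j hij
  have hfinj : Function.Injective (fun m : Fin n => ((a 0 - a m.succ : ℤ) : ℚ)) := by
    intro x y hxy
    simp only [sub_right_inj, Int.cast_inj] at hxy
    exact Fin.succ_injective _ (hainj (by linarith))
  have himg : Finset.image (fun m : Fin n => ((a 0 - a m.succ : ℤ) : ℚ)) Finset.univ
      = P.roots.toFinset := by
    apply Finset.eq_of_subset_of_card_le
    · intro x hx
      simp only [Finset.mem_image, Finset.mem_univ, true_and] at hx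
      obtain ⟨m, rfl⟩ := hx
      exact hmem 0 m.succ (Fin.succ_pos m)
    · rw [Finset.card_image_of_injective _ hfinj, Finset.card_univ, Fintype.card_fin]
      exact hcard_le
  have hdiff : ∀ i j : Fin (n+1), i < j → ∃ m : Fin n, a i - a j = a 0 - a m.succ := by
    intro i j hij
    have h := hmem i j hij
    rw [← himg, Finset.mem_image] at h
    obtain ⟨m, -, hm⟩ := h
    have hm' : ((a 0 - a m.succ : ℤ) : ℚ) = ((a i - a j : ℤ) : ℚ) := hm
    exact ⟨m, by exact_mod_cast hm'.symm⟩
  -- a ℕ-indexed copy of a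
  obtain ⟨b, hbdef⟩ : ∃ b : ℕ → ℤ, ∀ t : ℕ, b t = a ⟨min t n, by omega⟩ :=
    ⟨_, fun t => rfl⟩
  have hbeq : ∀ (t : ℕ) (h : t < n + 1), b t = a ⟨t, h⟩ := by
    intro t h
    rw [hbdef t]
    exact congrArg a (Fin.ext (by show min t n = t; omega))
  have e0 : b 0 = a 0 := by
    rw [hbeq 0 (by omega)]
    exact congrArg a (Fin.ext (by simp))
  have hb : ∀ p q : ℕ, p < q → q ≤ n → b p < b q := by
    intro p q hpq hqn
    rw [hbeq p (by omega), hbeq q (by omega)]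
    exact hmono (Fin.mk_lt_mk.mpr hpq)
  have hsucc : ∀ m : Fin n, a m.succ = b ((m : ℕ) + 1) := by
    intro m
    rw [hbeq ((m : ℕ) + 1) (by omega)]
    refine congrArg a (Fin.ext ?_)
    exact Fin.val_succ m
  have hdiffb : ∀ i j : ℕ, i < j → j ≤ n →
      ∃ t : ℕ, 1 ≤ t ∧ t ≤ n ∧ b i - b j = b 0 - b t := by
    intro i j hij hjn
    have hi' : i < n + 1 := by omega
    have hj' : j < n + 1 := by omega
    obtain ⟨m, hm⟩ := hdiff ⟨i, hi'⟩ ⟨j, hj'⟩ (Fin.mk_lt_mk.mpr hij)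
    refine ⟨(m : ℕ) + 1, by omega, by omega, ?_⟩
    have ei : b i = a ⟨i, hi'⟩ := hbeq i hi'
    have ej : b j = a ⟨j, hj'⟩ := hbeq j hj'
    have es : a m.succ = b ((m : ℕ) + 1) := hsucc m
    omega
  have hAPb := aux_arith_prog_nat n hn b hb hdiffb
  have h1' : (1 : ℕ) < n + 1 := by omega
  obtain ⟨k, hk⟩ : ∃ k : ℤ, k = a ⟨1, h1'⟩ - a 0 := ⟨_, rfl⟩
  have e1 : b 1 = a ⟨1, h1'⟩ := hbeq 1 h1'
  have hkpos : 0 < k := by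
    have h01 : b 0 < b 1 := hb 0 1 (by omega) (by omega)
    omega
  have hAP' : ∀ i : Fin (n+1), a i = a 0 + k * (i : ℕ) := by
    intro i
    have h := hAPb (i : ℕ) (by omega)
    have eiv : b (i : ℕ) = a i := by
      rw [hbeq (i : ℕ) i.isLt]
    rw [eiv, e0, e1] at h
    rw [hk]
    exact h
  have hval : ∀ m : Fin n, a 0 - a m.succ = -(k * ((m : ℕ) + 1)) := by
    intro m
    have h := hAP' m.succ
    rw [Fin.val_succ] at h
    push_cast at h ⊢
    linarith [h]
  constructor
  · have hginj : Function.Injective (fun m : Fin n => (a 0 - a m.succ : ℤ)) := by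
      intro x y hxy
      simp only [sub_right_inj] at hxy
      exact Fin.succ_injective _ (hainj hxy)
    have hSeq : {d : ℤ | ∃ i j : Fin (n + 1), i < j ∧ d = a i - a j}
        = ↑(Finset.image (fun m : Fin n => (a 0 - a m.succ : ℤ)) Finset.univ) := by
      ext d
      simp only [Set.mem_setOf_eq, Finset.coe_image, Finset.coe_univ, Set.image_univ,
        Set.mem_range]
      constructor
      · rintro ⟨i, j, hij, rfl⟩
        obtain ⟨m, hm⟩ := hdiff i j hij
        exact ⟨m, hm.symm⟩
      · rintro ⟨m, rfl⟩
        exact ⟨0, m.succ, Fin.succ_pos m, rfl⟩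
    rw [hSeq, Set.ncard_coe_finset, Finset.card_image_of_injective _ hginj,
      Finset.card_univ, Fintype.card_fin]
  · refine ⟨k, by omega, hAP', ?_⟩
    intro x
    constructor
    · intro hx
      have hxr : x ∈ P.roots.toFinset := by
        rw [Multiset.mem_toFinset, Polynomial.mem_roots hP0]
        exact hx
      rw [← himg, Finset.mem_image] at hxr
      obtain ⟨m, -, hm⟩ := hxr
      have hm' : ((a 0 - a m.succ : ℤ) : ℚ) = x := hm
      refine ⟨(m : ℕ) + 1, by omega, by omega, ?_⟩
      rw [← hm', hval m]
      push_cast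
      ring
    · rintro ⟨l, hl1, hln, rfl⟩
      have hlq : ∃ m : Fin n, (m : ℕ) + 1 = l :=
        ⟨⟨l - 1, by omega⟩, by show l - 1 + 1 = l; omega⟩
      obtain ⟨m, hmeq⟩ := hlq
      have hveq : -((l : ℚ) * (k : ℚ)) = ((a 0 - a m.succ : ℤ) : ℚ) := by
        rw [hval m]
        have hlc : (l : ℚ) = ((m : ℕ) : ℚ) + 1 := by exact_mod_cast hmeq.symm
        rw [hlc]
        push_cast
        ring
      rw [hveq]
      have h := hmem 0 m.succ (Fin.succ_pos m)
      rw [Multiset.mem_toFinset, Polynomial.mem_roots hP0] at h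
      exact h
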